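/- A game G = (T, A) is weakly finitely small in Games_A if and only if G is a finite game with A = Run(T) (i.e., G is finite and trivial for player Ali). -/

import Mathlib

universe u v w x y

namespace FraisseGames

/-- The initial segment (of length `n`) of an infinite sequence `R`. -/
def runPrefix {M : Type u} (R : ℕ → M) (n : ℕ) : List M :=
  (List.range n).map R

/-- `T` is a game tree over `M`: it is closed under initial segments, and every
moment of `T` has a one-step extension in `T`. -/
def IsGameTree {M : Type u} (T : Set (List M)) : Prop :=
  (∀ t ∈ T, ∀ k : ℕ, t.take k ∈ T) ∧ ∀ t ∈ T, ∃ x : M, t ++ [x] ∈ T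

/-- The set of runs of the tree `T`. -/
def Runs {M : Type u} (T : Set (List M)) : Set (ℕ → M) :=
  {R | ∀ n : ℕ, runPrefix R n ∈ T}

/-- A game over `M`: a game tree together with a payoff set of runs. -/
structure Game (M : Type u) : Type u where
  tree : Set (List M)
  isGameTree : IsGameTree tree
  payoff : Set (ℕ → M)
  payoff_subset : payoff ⊆ Runs tree

/-- A game is finite if its set of runs is finite. -/
def Game.IsFin {M : Type u} (G : Game M) : Prop := (Runs G.tree).Finite

/-- The subgame relation `G ≤ G'`. -/
def Game.Sub {M : Type u} (G G' : Game M) : Prop :=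
  G.tree ⊆ G'.tree ∧ G.payoff = G'.payoff ∩ Runs G.tree

/-- `f` is a chronological map from `T₁` to `T₂`: it maps `T₁` into `T₂` and it
preserves lengths and truncations of moments. -/
def Chronological {M₁ : Type u} {M₂ : Type v} (T₁ : Set (List M₁)) (T₂ : Set (List M₂))
    (f : List M₁ → List M₂) : Prop :=
  (∀ t ∈ T₁, f t ∈ T₂) ∧ (∀ t ∈ T₁, (f t).length = t.length) ∧
    ∀ t ∈ T₁, ∀ k : ℕ, f (t.take k) = (f t).take k

/-- `BarMapsTo f R S` says that the map `f̄` on runs induced by the chronological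
map `f` sends the run `R` to the run `S`, i.e. `S↾n = f (R↾n)` for all `n`. -/
def BarMapsTo {M₁ : Type u} {M₂ : Type v} (f : List M₁ → List M₂)
    (R : ℕ → M₁) (S : ℕ → M₂) : Prop :=
  ∀ n : ℕ, runPrefix S n = f (runPrefix R n)

/-- `f` is an A-morphism from `G₁` to `G₂`: a chronological map whose induced map on
runs sends runs won by Ali to runs won by Ali. -/
def IsAMorphism {M₁ : Type u} {M₂ : Type v} (G₁ : Game M₁) (G₂ : Game M₂)
    (f : List M₁ → List M₂) : Prop :=
  Chronological G₁.tree G₂.tree f ∧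
    ∀ R ∈ G₁.payoff, ∀ S : ℕ → M₂, BarMapsTo f R S → S ∈ G₂.payoff

/-- `f` is a game embedding from `G₁` to `G₂`: a chronological map, injective on the
tree, such that for every run `R` of `G₁`, `R ∈ A₁ ↔ f̄ R ∈ A₂`. -/
def IsGameEmbedding {M₁ : Type u} {M₂ : Type v} (G₁ : Game M₁) (G₂ : Game M₂)
    (f : List M₁ → List M₂) : Prop :=
  Chronological G₁.tree G₂.tree f ∧
    (∀ t ∈ G₁.tree, ∀ s ∈ G₁.tree, f t = f s → t = s) ∧
    ∀ R ∈ Runs G₁.tree, ∀ S : ℕ → M₂, BarMapsTo f R S → (R ∈ G₁.payoff ↔ S ∈ G₂.payoff)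

/-- `f` is an isomorphism of games from `G₁` onto `G₂`: a game embedding that is
surjective onto the tree of `G₂`. -/
def IsGameIso {M₁ : Type u} {M₂ : Type v} (G₁ : Game M₁) (G₂ : Game M₂)
    (f : List M₁ → List M₂) : Prop :=
  IsGameEmbedding G₁ G₂ f ∧ ∀ s ∈ G₂.tree, ∃ t ∈ G₁.tree, f t = s

/-- The set of eventually-zero infinite sequences of natural numbers. -/
def c00 : Set (ℕ → ℕ) := {R | ∃ N : ℕ, ∀ n ≥ N, R n = 0}

/-- The game `G_FL = (ω^{<ω}, c₀₀)`. -/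
def GFL : Game ℕ where
  tree := Set.univ
  isGameTree := ⟨fun _ _ _ => trivial, fun _ _ => ⟨0, trivial⟩⟩
  payoff := c00
  payoff_subset := fun _ _ _ => trivial

/-- The universal property of a colimit cocone in the category `Games_A` of games and
A-morphisms: every cocone of A-morphisms over the sequence factors through `q`
via a unique (up to agreement on the tree) A-morphism.  (Morphisms of `Games_A` are
identified when they agree on the game tree.) -/
def IsGamesACoconeColimit.{u', v', w'} {MS : ℕ → Type u'} (S : ∀ n, Game (MS n))
    (s : ∀ n, List (MS n) → List (MS (n + 1)))
    {N : Type v'} (L : Game N) (q : ∀ n, List (MS n) → List N) : Prop :=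
  ∀ (P : Type w') (H : Game P) (h : ∀ n, List (MS n) → List P),
    (∀ n, IsAMorphism (S n) H (h n)) →
    (∀ n, ∀ t ∈ (S n).tree, h (n + 1) (s n t) = h n t) →
    ∃ k : List N → List P, IsAMorphism L H k ∧
      (∀ n, ∀ t ∈ (S n).tree, k (q n t) = h n t) ∧
      ∀ k' : List N → List P, IsAMorphism L H k' →
        (∀ n, ∀ t ∈ (S n).tree, k' (q n t) = h n t) →
        ∀ t ∈ L.tree, k' t = k t

/-- A game `G` is weakly finitely small in `Games_A`: every A-morphism from `G` to
the colimit of a sequence in `Games_A` factors through some member of the sequence. -/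
def WeaklyFinSmallGamesA {M : Type u} (G : Game M) : Prop :=
  ∀ (MS : ℕ → Type u) (S : ∀ n, Game (MS n)) (s : ∀ n, List (MS n) → List (MS (n + 1))),
    (∀ n, IsAMorphism (S n) (S (n + 1)) (s n)) →
    ∀ (N : Type u) (L : Game N) (q : ∀ n, List (MS n) → List N),
      (∀ n, IsAMorphism (S n) L (q n)) →
      (∀ n, ∀ t ∈ (S n).tree, q (n + 1) (s n t) = q n t) →
      IsGamesACoconeColimit.{u, u, u} S s L q →
      ∀ f : List M → List N, IsAMorphism G L f →
        ∃ (n : ℕ) (f' : List M → List (MS n)),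
          IsAMorphism G (S n) f' ∧ ∀ t ∈ G.tree, q n (f' t) = f t

section Basics

variable {M : Type u} {M₁ : Type u} {M₂ : Type v} {M₃ : Type w}

@[simp] lemma runPrefix_length (R : ℕ → M) (n : ℕ) : (runPrefix R n).length = n := by
  simp [runPrefix]

lemma runPrefix_getElem (R : ℕ → M) {n i : ℕ} (h : i < (runPrefix R n).length) :
    (runPrefix R n)[i] = R i := by
  simp [runPrefix]

lemma runPrefix_eq_iff {R R' : ℕ → M} {n : ℕ} :
    runPrefix R n = runPrefix R' n ↔ ∀ i < n, R i = R' i := by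
  constructor
  · intro h i hi
    have h1 : i < (runPrefix R n).length := by simpa using hi
    have h2 : i < (runPrefix R' n).length := by simpa using hi
    have := List.getElem_of_eq h h1
    rw [runPrefix_getElem, runPrefix_getElem] at this
    exact this
  · intro h
    apply List.ext_getElem (by simp)
    intro i h1 h2
    rw [runPrefix_getElem, runPrefix_getElem]
    exact h i (by simpa using h1)

lemma runPrefix_inj {R R' : ℕ → M} (h : ∀ n, runPrefix R n = runPrefix R' n) : R = R' := by
  funext i
  exact runPrefix_eq_iff.1 (h (i + 1)) i (Nat.lt_succ_self i)

lemma runPrefix_take (R : ℕ → M) (n k : ℕ) :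
    (runPrefix R n).take k = runPrefix R (min k n) := by
  apply List.ext_getElem (by simp)
  intro i h1 h2
  simp only [List.getElem_take, runPrefix_getElem]

lemma runPrefix_take_of_le {n k : ℕ} (R : ℕ → M) (h : k ≤ n) :
    (runPrefix R n).take k = runPrefix R k := by
  rw [runPrefix_take, min_eq_left h]

lemma runPrefix_succ (R : ℕ → M) (n : ℕ) :
    runPrefix R (n + 1) = runPrefix R n ++ [R n] := by
  simp [runPrefix, List.range_succ]

lemma runPrefix_comp (g : M₁ → M₂) (R : ℕ → M₁) (n : ℕ) :
    runPrefix (fun i => g (R i)) n = (runPrefix R n).map g := by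
  simp [runPrefix, List.map_map]

/-- Every moment of a game tree extends to a run. -/
lemma exists_run_through {T : Set (List M)} (hT : IsGameTree T) {t : List M} (ht : t ∈ T) :
    ∃ R ∈ Runs T, runPrefix R t.length = t := by
  classical
  choose ext hext using hT.2
  let u : ℕ → {l : List M // l ∈ T} := fun k =>
    Nat.rec ⟨t, ht⟩ (fun _ p => ⟨p.1 ++ [ext p.1 p.2], hext p.1 p.2⟩) k
  have hu0 : (u 0).1 = t := rfl
  have hlen : ∀ k, (u k).1.length = t.length + k := by
    intro k; induction k with
    | zero => rfl
    | succ k ih => show ((u k).1 ++ _).length = _; simp [ih]; omega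
  have hpref : ∀ k m, k ≤ m → (u k).1 <+: (u m).1 := by
    intro k m hkm
    induction m with
    | zero => simp_all
    | succ m ih =>
      rcases Nat.lt_or_ge k (m+1) with h | h
      · exact (ih (by omega)).trans ⟨[ext (u m).1 (u m).2], rfl⟩
      · have : k = m + 1 := by omega
        subst this; exact List.prefix_refl _
  have hilt : ∀ i, i < (u (i+1)).1.length := fun i => by rw [hlen (i+1)]; omega
  refine ⟨fun i => (u (i+1)).1[i]'(hilt i), ?_, ?_⟩
  · intro m
    have hkey : runPrefix (fun i => (u (i+1)).1[i]'(hilt i)) m = (u m).1.take m := by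
      apply List.ext_getElem (by simp [hlen])
      intro i h1 h2
      rw [runPrefix_getElem, List.getElem_take]
      have him : i < m := by simpa using h1
      exact List.IsPrefix.getElem (hpref (i+1) m him) _
    rw [hkey]
    exact hT.1 _ (u m).2 m
  · have hkey : runPrefix (fun i => (u (i+1)).1[i]'(hilt i)) t.length = (u t.length).1.take t.length := by
      apply List.ext_getElem (by simp [hlen])
      intro i h1 h2
      rw [runPrefix_getElem, List.getElem_take]
      have him : i < t.length := by simpa using h1
      exact List.IsPrefix.getElem (hpref (i+1) t.length him) _
    rw [hkey]
    have : t <+: (u t.length).1 := hu0 ▸ hpref 0 t.length (Nat.zero_le _)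
    exact (List.prefix_iff_eq_take.1 this).symm

/-- Induced map on runs: existence. -/
lemma exists_bar {T₁ : Set (List M₁)} {T₂ : Set (List M₂)} {g : List M₁ → List M₂}
    (hg : Chronological T₁ T₂ g) {R : ℕ → M₁} (hR : R ∈ Runs T₁) :
    ∃ S, BarMapsTo g R S := by
  have hlen : ∀ m, (g (runPrefix R m)).length = m := fun m => by
    rw [hg.2.1 _ (hR m), runPrefix_length]
  have hilt : ∀ i, i < (g (runPrefix R (i+1))).length := fun i => by rw [hlen (i+1)]; omega
  refine ⟨fun i => (g (runPrefix R (i+1)))[i]'(hilt i), fun m => ?_⟩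
  apply List.ext_getElem (by simp [hlen])
  intro i h1 h2
  have him : i < m := by simpa using h1
  rw [runPrefix_getElem]
  have hpre : g (runPrefix R (i+1)) = (g (runPrefix R m)).take (i+1) := by
    rw [← hg.2.2 _ (hR m) (i+1), runPrefix_take_of_le _ (by omega)]
  have : (g (runPrefix R (i+1)))[i]'(hilt i) = (g (runPrefix R m))[i] := by
    simp only [hpre, List.getElem_take]
  rw [this]

lemma barMapsTo_unique {g : List M₁ → List M₂} {R : ℕ → M₁} {S S' : ℕ → M₂}
    (h : BarMapsTo g R S) (h' : BarMapsTo g R S') : S = S' :=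
  runPrefix_inj fun n => (h n).trans (h' n).symm

/-- Composition of A-morphisms. -/
lemma IsAMorphism.comp' {G₁ : Game M₁} {G₂ : Game M₂} {G₃ : Game M₃}
    {g₁ : List M₁ → List M₂} {g₂ : List M₂ → List M₃}
    (h₁ : IsAMorphism G₁ G₂ g₁) (h₂ : IsAMorphism G₂ G₃ g₂) :
    IsAMorphism G₁ G₃ (fun t => g₂ (g₁ t)) := by
  refine ⟨⟨fun t ht => h₂.1.1 _ (h₁.1.1 t ht), fun t ht => ?_, fun t ht k => ?_⟩, ?_⟩
  · rw [h₂.1.2.1 _ (h₁.1.1 t ht), h₁.1.2.1 t ht]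
  · show g₂ (g₁ (t.take k)) = (g₂ (g₁ t)).take k
    rw [h₁.1.2.2 t ht k, h₂.1.2.2 _ (h₁.1.1 t ht) k]
  · intro R hR S hS
    obtain ⟨S₂, hS₂⟩ := exists_bar h₁.1 (G₁.payoff_subset hR)
    have hS₂' : BarMapsTo g₂ S₂ S := fun m => by rw [hS m, hS₂ m]
    exact h₂.2 S₂ (h₁.2 R hR S₂ hS₂) S hS₂'

/-- Identity-function A-morphisms from tree and payoff inclusion. -/
lemma isAMorphism_id {G₁ G₂ : Game M} (h1 : G₁.tree ⊆ G₂.tree) (h2 : G₁.payoff ⊆ G₂.payoff) :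
    IsAMorphism G₁ G₂ id := by
  refine ⟨⟨fun t ht => h1 ht, fun t _ => rfl, fun t _ k => rfl⟩, ?_⟩
  intro R hR S hS
  have : S = R := runPrefix_inj fun n => hS n
  exact this ▸ h2 hR

end Basics
section Colimits

variable {M : Type u}

/-- The canonical colimit of a chain of games with identical connecting maps. -/
lemma isColimit_of_mono (SS : ℕ → Game M) (L : Game M)
    (hmono : ∀ n, (SS n).tree ⊆ (SS (n + 1)).tree)
    (htree : ∀ t, t ∈ L.tree ↔ ∃ n, t ∈ (SS n).tree)
    (hpay : ∀ R ∈ L.payoff, ∃ n, R ∈ (SS n).payoff ∧ R ∈ Runs (SS n).tree) :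
    IsGamesACoconeColimit.{u, u, u} SS (fun _ => id) L (fun _ => id) := by
  classical
  intro P H h hmor hcoc
  have htle : ∀ n m, n ≤ m → (SS n).tree ⊆ (SS m).tree := by
    intro n m hnm
    induction m with
    | zero => have : n = 0 := by omega
              subst this; exact subset_rfl
    | succ m ih =>
      rcases Nat.lt_or_ge n (m+1) with h' | h'
      · exact (ih (by omega)).trans (hmono m)
      · have : n = m + 1 := by omega
        subst this; exact subset_rfl
  have hagree : ∀ n m, n ≤ m → ∀ t ∈ (SS n).tree, h m t = h n t := by
    intro n m hnm
    induction m with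
    | zero => have : n = 0 := by omega
              subst this; intro t _; rfl
    | succ m ih =>
      rcases Nat.lt_or_ge n (m+1) with h' | h'
      · intro t ht
        have := hcoc m t (htle n m (by omega) ht)
        simp only [id] at this
        rw [this, ih (by omega) t ht]
      · have : n = m + 1 := by omega
        subst this; intro t _; rfl
  let k : List M → List P := fun v =>
    if hv : ∃ n, v ∈ (SS n).tree then h (Nat.find hv) v else []
  have keq : ∀ n, ∀ t ∈ (SS n).tree, k t = h n t := by
    intro n t ht
    have hv : ∃ n, t ∈ (SS n).tree := ⟨n, ht⟩
    have h1 : k t = h (Nat.find hv) t := dif_pos hv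
    rw [h1, hagree (Nat.find hv) n (Nat.find_min' hv ht) t (Nat.find_spec hv)]
  refine ⟨k, ⟨⟨?_, ?_, ?_⟩, ?_⟩, ?_, ?_⟩
  · intro v hv
    obtain ⟨n, hn⟩ := (htree v).1 hv
    rw [keq n v hn]; exact (hmor n).1.1 v hn
  · intro v hv
    obtain ⟨n, hn⟩ := (htree v).1 hv
    rw [keq n v hn]; exact (hmor n).1.2.1 v hn
  · intro v hv j
    obtain ⟨n, hn⟩ := (htree v).1 hv
    rw [keq n v hn, keq n _ ((SS n).isGameTree.1 v hn j)]
    exact (hmor n).1.2.2 v hn j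
  · intro R hR S hS
    obtain ⟨n, hRp, hRr⟩ := hpay R hR
    have : BarMapsTo (h n) R S := fun m => by rw [hS m, keq n _ (hRr m)]
    exact (hmor n).2 R hRp S this
  · intro n t ht; exact keq n t ht
  · intro k' _ hk' v hv
    obtain ⟨n, hn⟩ := (htree v).1 hv
    rw [keq n v hn]
    exact hk' n v hn

/-- The game tree of prefixes of a family of runs. -/
lemma isGameTree_prefixes (F : Set (ℕ → M)) :
    IsGameTree {t : List M | ∃ R ∈ F, t = runPrefix R t.length} := by
  constructor
  · rintro t ⟨R, hR, ht⟩ k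
    refine ⟨R, hR, ?_⟩
    have h2 : (t.take k).length = min k t.length := by simp
    rw [h2, ← runPrefix_take R t.length k, ← ht]
  · rintro t ⟨R, hR, ht⟩
    refine ⟨R t.length, R, hR, ?_⟩
    have h2 : (t ++ [R t.length]).length = t.length + 1 := by simp
    rw [h2, runPrefix_succ, ← ht]
lemma mem_prefixes_iff {F : Set (ℕ → M)} {t : List M} :
    (t ∈ {t : List M | ∃ R ∈ F, t = runPrefix R t.length}) ↔ ∃ R ∈ F, t = runPrefix R t.length :=
  Iff.rfl

lemma runs_subset_prefixes {F : Set (ℕ → M)} {R : ℕ → M} (hR : R ∈ F) :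
    R ∈ Runs {t : List M | ∃ R ∈ F, t = runPrefix R t.length} := by
  intro n
  exact ⟨R, hR, by rw [runPrefix_length]⟩

end Colimits
section NotSmall

variable {M : Type u}

lemma not_small_of_payoff_infinite (G : Game M) (hinf : G.payoff.Infinite) :
    ¬ WeaklyFinSmallGamesA G := by
  intro hsm
  classical
  let a : ℕ ↪ G.payoff := hinf.natEmbedding
  let SS : ℕ → Game M := fun n =>
    { tree := G.tree
      isGameTree := G.isGameTree
      payoff := {R | R ∈ Runs G.tree ∧ ∀ m, n < m → R ≠ (a m : ℕ → M)}
      payoff_subset := fun R hR => hR.1 }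
  let L : Game M :=
    { tree := G.tree
      isGameTree := G.isGameTree
      payoff := Runs G.tree
      payoff_subset := fun _ h => h }
  have hsmor : ∀ n, IsAMorphism (SS n) (SS (n + 1)) id := fun n =>
    isAMorphism_id subset_rfl (fun R hR => ⟨hR.1, fun m hm => hR.2 m (by omega)⟩)
  have hqmor : ∀ n, IsAMorphism (SS n) L id := fun n =>
    isAMorphism_id subset_rfl (fun R hR => hR.1)
  have hcolim : IsGamesACoconeColimit.{u, u, u} SS (fun _ => id) L (fun _ => id) := by
    apply isColimit_of_mono
    · intro n; exact subset_rfl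
    · intro t; exact ⟨fun ht => ⟨0, ht⟩, fun ⟨n, hn⟩ => hn⟩
    · intro R hR
      by_cases hex : ∃ m, R = (a m : ℕ → M)
      · obtain ⟨m, hm⟩ := hex
        refine ⟨m, ⟨hR, fun m' hm' h' => ?_⟩, hR⟩
        have : (a m : ℕ → M) = (a m' : ℕ → M) := by rw [← hm, h']
        have : a m = a m' := Subtype.coe_injective this
        have := a.injective this
        omega
      · push_neg at hex
        exact ⟨0, ⟨hR, fun m _ => hex m⟩, hR⟩
  have hfmor : IsAMorphism G L id := isAMorphism_id subset_rfl G.payoff_subset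
  obtain ⟨n, f', hf'mor, hf'fac⟩ := hsm (fun _ => M) SS (fun _ => id) hsmor M L (fun _ => id)
    hqmor (fun n t _ => rfl) hcolim id hfmor
  have hRmem : ((a (n + 1) : ℕ → M)) ∈ G.payoff := (a (n + 1)).2
  have hRruns : ((a (n + 1) : ℕ → M)) ∈ Runs G.tree := G.payoff_subset hRmem
  have hf'id : ∀ t ∈ G.tree, f' t = t := fun t ht => hf'fac t ht
  have hbar : BarMapsTo f' (a (n + 1) : ℕ → M) (a (n + 1) : ℕ → M) := fun m => by
    rw [hf'id _ (hRruns m)]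
  have := (hf'mor.2 _ hRmem _ hbar).2 (n + 1) (by omega)
  exact this rfl

end NotSmall

section NotSmall2
variable {M : Type u}

lemma not_small_of_limit (G : Game M) (R₀ : ℕ → M) (hR₀ : R₀ ∈ Runs G.tree)
    (hR₀A : R₀ ∉ G.payoff)
    (hlim : ∀ c, ∃ m, c < m ∧ ∃ R ∈ Runs G.tree, R ≠ R₀ ∧ runPrefix R m = runPrefix R₀ m) :
    ¬ WeaklyFinSmallGamesA G := by
  intro hsm
  classical
  have hlim' : ∀ c, ∃ d, c < d ∧ ∃ R ∈ Runs G.tree,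
      runPrefix R d = runPrefix R₀ d ∧ R d ≠ R₀ d := by
    intro c
    obtain ⟨m, hcm, R, hRr, hne, hag⟩ := hlim c
    have hex : ∃ i, R i ≠ R₀ i := by
      by_contra h; push_neg at h; exact hne (funext h)
    have hmle : m ≤ Nat.find hex := by
      by_contra h
      push_neg at h
      exact Nat.find_spec hex (runPrefix_eq_iff.1 hag _ h)
    refine ⟨Nat.find hex, by omega, R, hRr, ?_, Nat.find_spec hex⟩
    exact runPrefix_eq_iff.2 (fun i hi => by
      by_contra hne'; exact (Nat.find_min hex hi) hne')
  choose dfn hdfn using hlim'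
  choose Rfn hRfn hagfn hdivfn using fun c => (hdfn c).2
  have hclt : ∀ c, c < dfn c := fun c => (hdfn c).1
  let cs : ℕ → ℕ := fun n => Nat.rec 0 (fun _ p => dfn p) n
  let δ : ℕ → ℕ := fun n => dfn (cs n)
  let W : ℕ → (ℕ → M) := fun n => Rfn (cs n)
  have hδmono : StrictMono δ := by
    apply strictMono_nat_of_lt_succ
    intro n
    exact hclt (cs (n + 1))
  have hWruns : ∀ i, W i ∈ Runs G.tree := fun i => hRfn (cs i)
  have hWag : ∀ i, runPrefix (W i) (δ i) = runPrefix R₀ (δ i) := fun i => hagfn (cs i)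
  have hWdiv : ∀ i, W i (δ i) ≠ R₀ (δ i) := fun i => hdivfn (cs i)
  have hδge : ∀ i, i ≤ δ i := fun i => hδmono.le_apply
  let TT : ℕ → Set (List M) := fun n =>
    {t | t ∈ G.tree ∧ ∀ i, n < i → ¬ (runPrefix R₀ (δ i + 1) <+: t)}
  have hTTtree : ∀ n, IsGameTree (TT n) := by
    intro n
    constructor
    · rintro t ⟨ht, hpc⟩ k
      exact ⟨G.isGameTree.1 t ht k, fun i hi hpre => hpc i hi (hpre.trans (List.take_prefix k t))⟩
    · rintro t ⟨ht, hpc⟩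
      obtain ⟨x, hx⟩ := G.isGameTree.2 t ht
      by_cases hbad : ∃ i, n < i ∧ runPrefix R₀ (δ i + 1) <+: t ++ [x]
      · obtain ⟨i, hi, hpre⟩ := hbad
        have hnt := hpc i hi
        have hlen1 : δ i + 1 ≤ t.length + 1 := by simpa using hpre.length_le
        have hlent : t.length = δ i := by
          rcases Nat.lt_or_ge (δ i) t.length with h | h
          · exact absurd (List.prefix_of_prefix_length_le hpre (t.prefix_append [x])
              (by simp; omega)) hnt
          · omega
        have ht_eq : t = runPrefix R₀ (δ i) := by
          have heq : runPrefix R₀ (δ i + 1) = t ++ [x] :=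
            List.IsPrefix.eq_of_length hpre (by simp [hlent])
          have h2 := congrArg (List.take (δ i)) heq
          rw [runPrefix_take_of_le _ (by omega)] at h2
          have h3 : (t ++ [x]).take (δ i) = t := by
            rw [← hlent]; exact List.take_left
          rw [h3] at h2
          exact h2.symm
        refine ⟨W i (δ i), ?_, ?_⟩
        · have hty : t ++ [W i (δ i)] = runPrefix (W i) (δ i + 1) := by
            rw [runPrefix_succ, ht_eq, hWag i]
          rw [hty]
          exact hWruns i (δ i + 1)
        · intro j hj hpre'
          have hlen2 : δ j + 1 ≤ t.length + 1 := by simpa using hpre'.length_le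
          rcases Nat.lt_or_ge (δ j) t.length with h | h
          · exact hpc j hj (List.prefix_of_prefix_length_le hpre' (t.prefix_append _)
              (by simp; omega))
          · have : δ j = δ i := by omega
            have hji : j = i := hδmono.injective this
            subst hji
            have heq' : runPrefix R₀ (δ j + 1) = t ++ [W j (δ j)] :=
              List.IsPrefix.eq_of_length hpre' (by simp [hlent, this])
            rw [runPrefix_succ, ht_eq, this] at heq'
            have := List.append_cancel_left heq'
            simp at this
            exact (hWdiv j) this.symm
      · push_neg at hbad
        exact ⟨x, hx, fun i hi => hbad i hi⟩
  let SS : ℕ → Game M := fun n =>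
    { tree := TT n
      isGameTree := hTTtree n
      payoff := G.payoff ∩ Runs (TT n)
      payoff_subset := Set.inter_subset_right }
  have hTTmono : ∀ n, TT n ⊆ TT (n + 1) :=
    fun n t ht => ⟨ht.1, fun i hi => ht.2 i (by omega)⟩
  have hRunsmono : ∀ n, Runs (TT n) ⊆ Runs (TT (n + 1)) :=
    fun n R hR m => hTTmono n (hR m)
  have hsmor : ∀ n, IsAMorphism (SS n) (SS (n + 1)) id := fun n =>
    isAMorphism_id (hTTmono n) (fun R hR => ⟨hR.1, hRunsmono n hR.2⟩)
  have hqmor : ∀ n, IsAMorphism (SS n) G id := fun n =>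
    isAMorphism_id (fun t ht => ht.1) Set.inter_subset_left
  have hcolim : IsGamesACoconeColimit.{u, u, u} SS (fun _ => id) G (fun _ => id) := by
    apply isColimit_of_mono
    · exact hTTmono
    · intro t
      constructor
      · intro ht
        refine ⟨t.length, ht, fun i hi hpre => ?_⟩
        have h1 : δ i + 1 ≤ t.length := by simpa using hpre.length_le
        have := hδge i
        omega
      · rintro ⟨n, hn⟩; exact hn.1
    · intro R hR
      have hRruns : R ∈ Runs G.tree := G.payoff_subset hR
      have hRne : R ≠ R₀ := fun h => hR₀A (h ▸ hR)
      have hstage : ∃ n, ∀ i, n < i → runPrefix R (δ i + 1) ≠ runPrefix R₀ (δ i + 1) := by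
        by_contra h
        push_neg at h
        apply hRne
        funext j
        obtain ⟨i, hij, heq⟩ := h j
        have hji : j < δ i + 1 := by have := hδge i; omega
        exact runPrefix_eq_iff.1 heq j hji
      obtain ⟨n, hn⟩ := hstage
      have hRT : R ∈ Runs (TT n) := by
        intro m
        refine ⟨hRruns m, fun i hi hpre => ?_⟩
        have h1 : δ i + 1 ≤ m := by simpa using hpre.length_le
        have h2 : runPrefix R₀ (δ i + 1) = runPrefix R (δ i + 1) := by
          rw [List.prefix_iff_eq_take.1 hpre, runPrefix_length,
            runPrefix_take_of_le _ h1]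
        exact hn i hi h2.symm
      exact ⟨n, ⟨hR, hRT⟩, hRT⟩
  have hfmor : IsAMorphism G G id := isAMorphism_id subset_rfl subset_rfl
  obtain ⟨n, f', hf'mor, hf'fac⟩ := hsm (fun _ => M) SS (fun _ => id) hsmor M G (fun _ => id)
    hqmor (fun n t _ => rfl) hcolim id hfmor
  have htst : runPrefix R₀ (δ (n + 1) + 1) ∈ G.tree := hR₀ _
  have h1 : f' (runPrefix R₀ (δ (n + 1) + 1)) = runPrefix R₀ (δ (n + 1) + 1) := hf'fac _ htst
  have h2 := hf'mor.1.1 _ htst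
  rw [h1] at h2
  exact h2.2 (n + 1) (by omega) (List.prefix_refl _)

end NotSmall2

section NotSmall3
variable {M : Type u}

lemma not_small_of_isolated (G : Game M) (R₀ : ℕ → M) (c : ℕ) (hR₀ : R₀ ∈ Runs G.tree)
    (hR₀A : R₀ ∉ G.payoff)
    (hiso : ∀ m, c < m → ∀ R ∈ Runs G.tree, runPrefix R m = runPrefix R₀ m → R = R₀) :
    ¬ WeaklyFinSmallGamesA G := by
  intro hsm
  classical
  let μ : M → M × ℕ := fun x => (x, 0)
  have hμinj : Function.Injective μ := fun a b h => congrArg Prod.fst h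
  let fR : (ℕ → M) → (ℕ → M × ℕ) := fun R i => (R i, 0)
  have hfRcomp : ∀ (R : ℕ → M) (m : ℕ), runPrefix (fR R) m = (runPrefix R m).map μ :=
    fun R m => runPrefix_comp μ R m
  let D : ℕ → (ℕ → M × ℕ) := fun j i => (R₀ i, if i < j then 0 else 1)
  have hDfr : ∀ m j, m ≤ j → runPrefix (D j) m = runPrefix (fR R₀) m := by
    intro m j hmj
    exact runPrefix_eq_iff.2 (fun i hi => by simp [D, fR, μ]; omega)
  let Fn : ℕ → Set (ℕ → M × ℕ) := fun n =>
    {S | ∃ R ∈ Runs G.tree, R ≠ R₀ ∧ S = fR R} ∪ {S | ∃ j ≤ n, S = D j}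
  let Finf : Set (ℕ → M × ℕ) :=
    {S | ∃ R ∈ Runs G.tree, R ≠ R₀ ∧ S = fR R} ∪ {S | ∃ j, S = D j}
  have hpayss : ∀ (F : Set (ℕ → M × ℕ)),
      ({S | ∃ R ∈ Runs G.tree, R ≠ R₀ ∧ S = fR R} ⊆ F) →
      {S | ∃ R ∈ G.payoff, S = fR R} ⊆ Runs {t : List (M × ℕ) | ∃ R ∈ F, t = runPrefix R t.length} := by
    rintro F hF S ⟨R, hR, rfl⟩
    exact runs_subset_prefixes (hF ⟨R, G.payoff_subset hR, fun h => hR₀A (h ▸ hR), rfl⟩)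
  let SS : ℕ → Game (M × ℕ) := fun n =>
    { tree := {t | ∃ R ∈ Fn n, t = runPrefix R t.length}
      isGameTree := isGameTree_prefixes _
      payoff := {S | ∃ R ∈ G.payoff, S = fR R}
      payoff_subset := hpayss (Fn n) Set.subset_union_left }
  let L : Game (M × ℕ) :=
    { tree := {t | ∃ R ∈ Finf, t = runPrefix R t.length}
      isGameTree := isGameTree_prefixes _
      payoff := {S | ∃ R ∈ G.payoff, S = fR R}
      payoff_subset := hpayss Finf Set.subset_union_left }
  have hFmono : ∀ n, Fn n ⊆ Fn (n + 1) := by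
    rintro n S (h | ⟨j, hj, rfl⟩)
    · exact Or.inl h
    · exact Or.inr ⟨j, by omega, rfl⟩
  have hFinf : ∀ n, Fn n ⊆ Finf := by
    rintro n S (h | ⟨j, hj, rfl⟩)
    · exact Or.inl h
    · exact Or.inr ⟨j, rfl⟩
  have htreemono : ∀ n, (SS n).tree ⊆ (SS (n + 1)).tree := by
    rintro n t ⟨R, hR, ht⟩; exact ⟨R, hFmono n hR, ht⟩
  have hsmor : ∀ n, IsAMorphism (SS n) (SS (n + 1)) id := fun n =>
    isAMorphism_id (htreemono n) subset_rfl
  have hqmor : ∀ n, IsAMorphism (SS n) L id := fun n =>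
    isAMorphism_id (by rintro t ⟨R, hR, ht⟩; exact ⟨R, hFinf n hR, ht⟩) subset_rfl
  have hcolim : IsGamesACoconeColimit.{u, u, u} SS (fun _ => id) L (fun _ => id) := by
    apply isColimit_of_mono
    · exact htreemono
    · intro t
      constructor
      · rintro ⟨R, (h | ⟨j, rfl⟩), ht⟩
        · exact ⟨0, R, Or.inl h, ht⟩
        · exact ⟨j, D j, Or.inr ⟨j, le_refl j, rfl⟩, ht⟩
      · rintro ⟨n, R, hR, ht⟩
        exact ⟨R, hFinf n hR, ht⟩
    · intro S hS
      exact ⟨0, hS, hpayss (Fn 0) Set.subset_union_left hS⟩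
  let f : List M → List (M × ℕ) := fun t => t.map μ
  have hfmor : IsAMorphism G L f := by
    refine ⟨⟨?_, ?_, ?_⟩, ?_⟩
    · intro t ht
      obtain ⟨R, hRr, hRt⟩ := exists_run_through G.isGameTree ht
      by_cases hR0 : R = R₀
      · subst hR0
        refine ⟨D t.length, Or.inr ⟨t.length, rfl⟩, ?_⟩
        rw [List.length_map, hDfr t.length t.length le_rfl, hfRcomp, hRt]
      · refine ⟨fR R, Or.inl ⟨R, hRr, hR0, rfl⟩, ?_⟩
        rw [List.length_map, hfRcomp, hRt]
    · intro t _; exact List.length_map μ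
    · intro t _ k; exact List.map_take
    · intro R hR S hS
      have : S = fR R := by
        apply runPrefix_inj
        intro m
        rw [hS m, hfRcomp]
      exact ⟨R, hR, this⟩
  obtain ⟨n, f', hf'mor, hf'fac⟩ := hsm (fun _ => M × ℕ) SS (fun _ => id) hsmor (M × ℕ) L
    (fun _ => id) hqmor (fun _ _ _ => rfl) hcolim f hfmor
  set m := n + c + 1 with hm
  have htst : runPrefix R₀ m ∈ G.tree := hR₀ m
  have h1 : f' (runPrefix R₀ m) = f (runPrefix R₀ m) := hf'fac _ htst
  have h2 := hf'mor.1.1 _ htst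
  rw [h1] at h2
  obtain ⟨X, hX, hXeq⟩ := h2
  rw [List.length_map, runPrefix_length] at hXeq
  rcases hX with ⟨R, hRr, hRne, rfl⟩ | ⟨j, hj, rfl⟩
  · rw [hfRcomp] at hXeq
    have : runPrefix R₀ m = runPrefix R m := by
      apply List.map_injective_iff.2 hμinj
      exact hXeq
    exact hRne (hiso m (by omega) R hRr this.symm)
  · have hXeq' : runPrefix (fR R₀) m = runPrefix (D j) m := by
      rw [hfRcomp, ← hXeq]
    have := runPrefix_eq_iff.1 hXeq' j (by omega)
    have h3 := congrArg Prod.snd this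
    simp [fR, D] at h3
end NotSmall3

section MP
variable {M : Type u}

lemma fin_triv_of_small (G : Game M) (hsm : WeaklyFinSmallGamesA G) :
    G.IsFin ∧ G.payoff = Runs G.tree := by
  classical
  have htriv : G.payoff = Runs G.tree := by
    apply Set.Subset.antisymm G.payoff_subset
    by_contra h
    rw [Set.not_subset] at h
    obtain ⟨R₀, hR₀, hR₀A⟩ := h
    by_cases hiso : ∃ c, ∀ m, c < m → ∀ R ∈ Runs G.tree, runPrefix R m = runPrefix R₀ m → R = R₀
    · obtain ⟨c, hc⟩ := hiso
      exact not_small_of_isolated G R₀ c hR₀ hR₀A hc hsm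
    · push_neg at hiso
      apply not_small_of_limit G R₀ hR₀ hR₀A ?_ hsm
      intro c
      obtain ⟨m, hcm, R, hRr, heq, hne⟩ := hiso c
      exact ⟨m, hcm, R, hRr, hne, heq⟩
  refine ⟨?_, htriv⟩
  by_contra hninf
  exact not_small_of_payoff_infinite G (by rw [htriv]; exact hninf) hsm

end MP

section MPR
variable {M : Type u}

lemma small_of_fin_triv (G : Game M) (hfin : G.IsFin) (htriv : G.payoff = Runs G.tree) :
    WeaklyFinSmallGamesA G := by
  classical
  intro MS SS s hs N L q hq hqcomm hcolim f hf
  -- trivial case: empty tree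
  by_cases hTe : ∀ t : List M, t ∉ G.tree
  · refine ⟨0, fun _ => [], ⟨⟨fun t ht => absurd ht (hTe t), fun t ht => absurd ht (hTe t),
      fun t ht => absurd ht (hTe t)⟩, ?_⟩, fun t ht => absurd ht (hTe t)⟩
    intro R hR S hS
    exact absurd (G.payoff_subset hR 0) (hTe _)
  push_neg at hTe
  obtain ⟨t₀, ht₀⟩ := hTe
  obtain ⟨Rstar, hRstar, -⟩ := exists_run_through G.isGameTree ht₀
  -- ===== chains of connecting maps =====
  let chain : ∀ (n k : ℕ), List (MS n) → List (MS (n + k)) := fun n k =>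
    Nat.rec (motive := fun k => List (MS n) → List (MS (n + k))) (fun t => t)
      (fun k ih t => s (n + k) (ih t)) k
  have chain_mor : ∀ n k, IsAMorphism (SS n) (SS (n + k)) (chain n k) := by
    intro n k
    induction k with
    | zero =>
      refine ⟨⟨fun t ht => ht, fun t _ => rfl, fun t _ k => rfl⟩, ?_⟩
      intro R hR S hS
      have : S = R := runPrefix_inj fun m => hS m
      exact this ▸ hR
    | succ k ih => exact IsAMorphism.comp' ih (hs (n + k))
  have q_chain : ∀ n k, ∀ t ∈ (SS n).tree, q (n + k) (chain n k t) = q n t := by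
    intro n k
    induction k with
    | zero => intro t _; rfl
    | succ k ih =>
      intro t ht
      have h1 : q ((n + k) + 1) (s (n + k) (chain n k t)) = q (n + k) (chain n k t) :=
        hqcomm (n + k) _ ((chain_mor n k).1.1 t ht)
      exact h1.trans (ih t ht)
  have chain_stable : ∀ n k j (x y : List (MS n)), chain n k x = chain n k y →
      chain n (k + j) x = chain n (k + j) y := by
    intro n k j x y h
    induction j with
    | zero => exact h
    | succ j ih =>
      show s (n + (k + j)) (chain n (k + j) x) = s (n + (k + j)) (chain n (k + j) y)
      rw [ih]
  have chain_le_stable : ∀ n k K (x y : List (MS n)), k ≤ K → chain n k x = chain n k y →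
      chain n K x = chain n K y := by
    intro n k K x y hkK h
    obtain ⟨j, rfl⟩ := Nat.exists_eq_add_of_le hkK
    exact chain_stable n k j x y h
  -- ===== every payoff run of L is covered by some stage =====
  have hP'sub : {S | ∃ n R, R ∈ (SS n).payoff ∧ BarMapsTo (q n) R S} ⊆ Runs L.tree := by
    rintro S ⟨n, R, hR, hbar⟩ m
    rw [hbar m]
    exact (hq n).1.1 _ ((SS n).payoff_subset hR m)
  obtain ⟨k1, hk1mor, hk1comm, -⟩ := hcolim N
    { tree := L.tree, isGameTree := L.isGameTree,
      payoff := {S | ∃ n R, R ∈ (SS n).payoff ∧ BarMapsTo (q n) R S},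
      payoff_subset := hP'sub } q (fun n => ⟨(hq n).1, fun R hR S hS => ⟨n, R, hR, hS⟩⟩) hqcomm
  obtain ⟨k0, hk0mor, hk0comm, huniq⟩ := hcolim N L q hq hqcomm
  have hidk0 : ∀ t ∈ L.tree, id t = k0 t :=
    huniq id (isAMorphism_id subset_rfl subset_rfl) (fun n t ht => rfl)
  have hk1k0 : ∀ t ∈ L.tree, k1 t = k0 t :=
    huniq k1 ⟨hk1mor.1, fun R hR S hS => by
      obtain ⟨n, R', hR', hbar⟩ := hk1mor.2 R hR S hS
      exact (hq n).2 R' hR' S hbar⟩ hk1comm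
  have hk1id : ∀ t ∈ L.tree, k1 t = t := fun t ht => (hk1k0 t ht).trans (hidk0 t ht).symm
  have hcov : ∀ SL ∈ L.payoff, ∃ n R, R ∈ (SS n).payoff ∧ BarMapsTo (q n) R SL := by
    intro SL hSL
    have hbar : BarMapsTo k1 SL SL := fun m => (hk1id _ (L.payoff_subset hSL m)).symm
    exact hk1mor.2 SL hSL SL hbar
  -- ===== the quotient game: identifications in L are witnessed at finite stages =====
  let Sig := (n : ℕ) × List (MS n)
  let r : Sig → Sig → Prop := fun a b => b = ⟨a.1 + 1, s a.1 a.2⟩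
  let NQ := Quot r
  let hfun : ∀ n, List (MS n) → List NQ := fun n t =>
    runPrefix (fun j => Quot.mk r ⟨n, t.take (j + 1)⟩) t.length
  have hfun_len : ∀ n (t : List (MS n)), (hfun n t).length = t.length := by
    intro n t; exact runPrefix_length _ _
  have hfun_take : ∀ n (t : List (MS n)) k, (hfun n t).take k = hfun n (t.take k) := by
    intro n t k
    show (runPrefix _ t.length).take k = runPrefix _ (t.take k).length
    rw [runPrefix_take, List.length_take]
    apply List.ext_getElem (by first | rfl | simp)
    intro i h1 h2
    rw [runPrefix_getElem, runPrefix_getElem]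
    have hik : i < k := by simp at h1; omega
    congr 2
    rw [List.take_take]
    congr 1
    omega
  have hfun_append : ∀ n (t : List (MS n)) x,
      hfun n (t ++ [x]) = hfun n t ++ [Quot.mk r ⟨n, t ++ [x]⟩] := by
    intro n t x
    show runPrefix _ (t ++ [x]).length = runPrefix _ t.length ++ _
    have hlap : (t ++ [x]).length = t.length + 1 := by simp
    rw [hlap, runPrefix_succ]
    congr 1
    · apply List.ext_getElem (by simp)
      intro i h1 h2
      rw [runPrefix_getElem, runPrefix_getElem]
      congr 2
      exact List.take_append_of_le_length (by simp at h1; omega)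
    · exact congrArg (fun l => [Quot.mk r ⟨n, l⟩]) (List.take_of_length_le (le_of_eq hlap))
  let HQ : Game NQ :=
    { tree := {v | ∃ n, ∃ t ∈ (SS n).tree, v = hfun n t}
      isGameTree := by
        constructor
        · rintro v ⟨n, t, ht, rfl⟩ k
          exact ⟨n, t.take k, (SS n).isGameTree.1 t ht k, (hfun_take n t k)⟩
        · rintro v ⟨n, t, ht, rfl⟩
          obtain ⟨x, hx⟩ := (SS n).isGameTree.2 t ht
          exact ⟨Quot.mk r ⟨n, t ++ [x]⟩, n, t ++ [x], hx, (hfun_append n t x).symm⟩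
      payoff := {S | ∃ n R, R ∈ (SS n).payoff ∧ BarMapsTo (hfun n) R S}
      payoff_subset := by
        rintro S ⟨n, R, hR, hbar⟩ m
        rw [hbar m]
        exact ⟨n, runPrefix R m, (SS n).payoff_subset hR m, rfl⟩ }
  have hQmor : ∀ n, IsAMorphism (SS n) HQ (hfun n) := by
    intro n
    exact ⟨⟨fun t ht => ⟨n, t, ht, rfl⟩, fun t _ => hfun_len n t,
      fun t _ k => (hfun_take n t k).symm⟩, fun R hR S hS => ⟨n, R, hR, hS⟩⟩
  have hQcoc : ∀ n, ∀ t ∈ (SS n).tree, hfun (n + 1) (s n t) = hfun n t := by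
    intro n t ht
    show runPrefix _ (s n t).length = runPrefix _ t.length
    rw [(hs n).1.2.1 t ht]
    apply List.ext_getElem (by simp)
    intro i h1 h2
    rw [runPrefix_getElem, runPrefix_getElem]
    rw [← (hs n).1.2.2 t ht (i + 1)]
    exact (Quot.sound (show r ⟨n, t.take (i + 1)⟩ ⟨n + 1, s n (t.take (i + 1))⟩ from rfl)).symm
  obtain ⟨kQ, -, hkQ, -⟩ := hcolim NQ HQ hfun hQmor hQcoc
  let pushS : Sig → ℕ → Sig := fun a k => ⟨a.1 + k, chain a.1 k a.2⟩
  let stepS : Sig → Sig := fun a => ⟨a.1 + 1, s a.1 a.2⟩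
  have pushS_add : ∀ a k j, pushS a (k + j) = pushS (pushS a k) j := by
    intro a k j
    induction j with
    | zero => rfl
    | succ j ih =>
      calc pushS a (k + (j + 1)) = stepS (pushS a (k + j)) := rfl
      _ = stepS (pushS (pushS a k) j) := by rw [ih]
      _ = pushS (pushS a k) (j + 1) := rfl
  have hE : ∀ a b, Relation.EqvGen r a b → ∃ k₁ k₂, pushS a k₁ = pushS b k₂ := by
    intro a b h
    induction h with
    | rel a b hab => exact ⟨1, 0, by rw [hab]; rfl⟩
    | refl a => exact ⟨0, 0, rfl⟩
    | symm a b _ ih => obtain ⟨k₁, k₂, h'⟩ := ih; exact ⟨k₂, k₁, h'.symm⟩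
    | trans a b c _ _ ih₁ ih₂ =>
      obtain ⟨k₁, k₂, h₁⟩ := ih₁
      obtain ⟨k₃, k₄, h₂⟩ := ih₂
      refine ⟨k₁ + k₃, k₄ + k₂, ?_⟩
      calc pushS a (k₁ + k₃) = pushS (pushS a k₁) k₃ := pushS_add a k₁ k₃
      _ = pushS (pushS b k₂) k₃ := by rw [h₁]
      _ = pushS b (k₂ + k₃) := (pushS_add b k₂ k₃).symm
      _ = pushS b (k₃ + k₂) := by rw [Nat.add_comm k₂ k₃]
      _ = pushS (pushS b k₃) k₂ := pushS_add b k₃ k₂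
      _ = pushS (pushS c k₄) k₂ := by rw [h₂]
      _ = pushS c (k₄ + k₂) := (pushS_add c k₄ k₂).symm
  have hcoh : ∀ n (x y : List (MS n)), x ∈ (SS n).tree → y ∈ (SS n).tree →
      q n x = q n y → ∃ k, chain n k x = chain n k y := by
    intro n x y hx hy hqxy
    have hfxy : hfun n x = hfun n y := by
      rw [← hkQ n x hx, ← hkQ n y hy, hqxy]
    have hlxy : x.length = y.length := by
      have := congrArg List.length hfxy
      rwa [hfun_len, hfun_len] at this
    rcases Nat.eq_zero_or_pos x.length with h0 | hpos
    · have hx0 : x = [] := List.length_eq_zero_iff.1 h0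
      have hy0 : y = [] := List.length_eq_zero_iff.1 (by omega)
      exact ⟨0, by rw [hx0, hy0]⟩
    · have hfxy2 : runPrefix (fun j => Quot.mk r ⟨n, x.take (j + 1)⟩) x.length
          = runPrefix (fun j => Quot.mk r ⟨n, y.take (j + 1)⟩) x.length := by
        have h' : runPrefix (fun j => Quot.mk r ⟨n, x.take (j + 1)⟩) x.length
            = runPrefix (fun j => Quot.mk r ⟨n, y.take (j + 1)⟩) y.length := hfxy
        rw [← hlxy] at h'
        exact h'
      have hent := runPrefix_eq_iff.1 hfxy2 (x.length - 1) (by omega)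
      have hxt : x.length - 1 + 1 = x.length := by omega
      rw [hxt] at hent
      rw [List.take_length] at hent
      have hyfull : y.take x.length = y := by rw [hlxy, List.take_length]
      rw [hyfull] at hent
      obtain ⟨k₁, k₂, hpp⟩ := hE _ _ (Quot.eqvGen_exact hent)
      have hk12 : k₁ = k₂ := by
        have := congrArg Sigma.fst hpp
        simpa [pushS] using this
      subst hk12
      have hpp2 : (⟨n + k₁, chain n k₁ x⟩ : Sig) = ⟨n + k₁, chain n k₁ y⟩ := hpp
      injection hpp2 with h1' h2'
      exact ⟨k₁, h2'⟩
  -- ===== lift payoff runs of G =====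
  have hSLex : ∀ R : ℕ → M, R ∈ Runs G.tree → ∃ SL, BarMapsTo f R SL ∧ SL ∈ L.payoff := by
    intro R hR
    obtain ⟨SL, hSL⟩ := exists_bar hf.1 hR
    exact ⟨SL, hSL, hf.2 R (by rw [htriv]; exact hR) SL hSL⟩
  choose SL hSLbar hSLpay using hSLex
  have hLiftUp : ∀ (SL' : ℕ → N) (n k : ℕ),
      (∃ P, P ∈ (SS n).payoff ∧ BarMapsTo (q n) P SL') →
      (∃ P, P ∈ (SS (n + k)).payoff ∧ BarMapsTo (q (n + k)) P SL') := by
    intro SL' n k h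
    induction k with
    | zero => exact h
    | succ k ih =>
      obtain ⟨P, hP, hbar⟩ := ih
      obtain ⟨P', hbar'⟩ := exists_bar (hs (n + k)).1 ((SS (n + k)).payoff_subset hP)
      refine ⟨P', (hs (n + k)).2 P hP P' hbar', fun m => ?_⟩
      rw [hbar m, ← hqcomm (n + k) _ ((SS (n + k)).payoff_subset hP m), ← hbar' m]
      rfl
  have hLiftLe : ∀ (SL' : ℕ → N) (n m : ℕ), n ≤ m →
      (∃ P, P ∈ (SS n).payoff ∧ BarMapsTo (q n) P SL') →
      (∃ P, P ∈ (SS m).payoff ∧ BarMapsTo (q m) P SL') := by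
    intro SL' n m hnm h
    obtain ⟨k, rfl⟩ := Nat.exists_eq_add_of_le hnm
    exact hLiftUp SL' n k h
  have hnex : ∀ (R : ℕ → M) (hR : R ∈ Runs G.tree),
      ∃ n, ∃ P, P ∈ (SS n).payoff ∧ BarMapsTo (q n) P (SL R hR) := by
    intro R hR
    obtain ⟨n, P, h1, h2⟩ := hcov _ (hSLpay R hR)
    exact ⟨n, P, h1, h2⟩
  choose nst hnst using hnex
  set m₀ := hfin.toFinset.sup (fun R => if h : R ∈ Runs G.tree then nst R h else 0) with hm₀def
  have hm₀lift : ∀ (R : ℕ → M) (hR : R ∈ Runs G.tree),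
      ∃ P, P ∈ (SS m₀).payoff ∧ BarMapsTo (q m₀) P (SL R hR) := by
    intro R hR
    apply hLiftLe _ _ _ _ (hnst R hR)
    have hmem : R ∈ hfin.toFinset := hfin.mem_toFinset.2 hR
    have hle := Finset.le_sup (f := fun R => if h : R ∈ Runs G.tree then nst R h else 0) hmem
    have hle2 : (if h : R ∈ Runs G.tree then nst R h else 0) ≤ m₀ := hle
    rw [dif_pos hR] at hle2
    exact hle2
  choose P₀ hP₀pay hP₀bar using hm₀lift
  -- ===== separation points =====
  have hdex : ∀ (R R' : ℕ → M), ∃ d, R ≠ R' →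
      (runPrefix R d = runPrefix R' d ∧ R d ≠ R' d ∧
        ∀ e, runPrefix R e = runPrefix R' e → e ≤ d) := by
    intro R R'
    by_cases hne : R = R'
    · exact ⟨0, fun h => absurd hne h⟩
    · have hex : ∃ i, R i ≠ R' i := by
        by_contra h; push_neg at h; exact hne (funext h)
      refine ⟨Nat.find hex, fun _ => ⟨?_, Nat.find_spec hex, ?_⟩⟩
      · exact runPrefix_eq_iff.2 fun i hi => by
          by_contra hc; exact (Nat.find_min hex hi) hc
      · intro e he
        by_contra hc
        push_neg at hc
        exact Nat.find_spec hex (runPrefix_eq_iff.1 he _ hc)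
  choose ddf hddf using hdex
  -- ===== pairwise coherence stages =====
  have hkex : ∀ R R' : ℕ → M, ∃ k, ∀ (hR : R ∈ Runs G.tree) (hR' : R' ∈ Runs G.tree), R ≠ R' →
      chain m₀ k (runPrefix (P₀ R hR) (ddf R R'))
        = chain m₀ k (runPrefix (P₀ R' hR') (ddf R R')) := by
    intro R R'
    by_cases hcond : R ∈ Runs G.tree ∧ R' ∈ Runs G.tree ∧ R ≠ R'
    · obtain ⟨hR, hR', hne⟩ := hcond
      have hag : runPrefix R (ddf R R') = runPrefix R' (ddf R R') := (hddf R R' hne).1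
      have hx : runPrefix (P₀ R hR) (ddf R R') ∈ (SS m₀).tree :=
        (SS m₀).payoff_subset (hP₀pay R hR) _
      have hy : runPrefix (P₀ R' hR') (ddf R R') ∈ (SS m₀).tree :=
        (SS m₀).payoff_subset (hP₀pay R' hR') _
      have hqeq : q m₀ (runPrefix (P₀ R hR) (ddf R R'))
          = q m₀ (runPrefix (P₀ R' hR') (ddf R R')) := by
        rw [← hP₀bar R hR (ddf R R'), ← hP₀bar R' hR' (ddf R R'),
          hSLbar R hR (ddf R R'), hSLbar R' hR' (ddf R R'), hag]
      obtain ⟨k, hk⟩ := hcoh m₀ _ _ hx hy hqeq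
      exact ⟨k, fun _ _ _ => hk⟩
    · exact ⟨0, fun hR hR' hne => absurd ⟨hR, hR', hne⟩ hcond⟩
  choose kpf hkpf using hkex
  set K := (hfin.toFinset ×ˢ hfin.toFinset).sup (fun p => kpf p.1 p.2) with hKdef
  have hK : ∀ (R R' : ℕ → M) (hR : R ∈ Runs G.tree) (hR' : R' ∈ Runs G.tree) (d : ℕ),
      runPrefix R d = runPrefix R' d →
      chain m₀ K (runPrefix (P₀ R hR) d) = chain m₀ K (runPrefix (P₀ R' hR') d) := by
    intro R R' hR hR' d hag
    rcases eq_or_ne R R' with rfl | hne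
    · rfl
    · have hkle : kpf R R' ≤ K := by
        have hmem : (R, R') ∈ hfin.toFinset ×ˢ hfin.toFinset :=
          Finset.mem_product.2 ⟨hfin.mem_toFinset.2 hR, hfin.mem_toFinset.2 hR'⟩
        exact Finset.le_sup (f := fun p => kpf p.1 p.2) hmem
      have hd : d ≤ ddf R R' := (hddf R R' hne).2.2 d hag
      have hatK : chain m₀ K (runPrefix (P₀ R hR) (ddf R R'))
          = chain m₀ K (runPrefix (P₀ R' hR') (ddf R R')) :=
        chain_le_stable m₀ (kpf R R') K _ _ hkle (hkpf R R' hR hR' hne)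
      have hxmem : runPrefix (P₀ R hR) (ddf R R') ∈ (SS m₀).tree :=
        (SS m₀).payoff_subset (hP₀pay R hR) _
      have hymem : runPrefix (P₀ R' hR') (ddf R R') ∈ (SS m₀).tree :=
        (SS m₀).payoff_subset (hP₀pay R' hR') _
      have h1 := (chain_mor m₀ K).1.2.2 _ hxmem d
      have h2 := (chain_mor m₀ K).1.2.2 _ hymem d
      rw [runPrefix_take_of_le _ hd] at h1 h2
      rw [h1, h2, hatK]
  -- ===== push the lifts to the common stage =====
  have hPex : ∀ (R : ℕ → M) (hR : R ∈ Runs G.tree),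
      ∃ P, BarMapsTo (chain m₀ K) (P₀ R hR) P :=
    fun R hR => exists_bar (chain_mor m₀ K).1 ((SS m₀).payoff_subset (hP₀pay R hR))
  choose Pf hPf using hPex
  have hPpay : ∀ R hR, Pf R hR ∈ (SS (m₀ + K)).payoff :=
    fun R hR => (chain_mor m₀ K).2 _ (hP₀pay R hR) _ (hPf R hR)
  have hPbar : ∀ R hR, BarMapsTo (q (m₀ + K)) (Pf R hR) (SL R hR) := by
    intro R hR j
    rw [hPf R hR j, q_chain m₀ K _ ((SS m₀).payoff_subset (hP₀pay R hR) j)]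
    exact hP₀bar R hR j
  have hPcoh : ∀ (R R' : ℕ → M) (hR : R ∈ Runs G.tree) (hR' : R' ∈ Runs G.tree) (d : ℕ),
      runPrefix R d = runPrefix R' d → runPrefix (Pf R hR) d = runPrefix (Pf R' hR') d := by
    intro R R' hR hR' d hag
    rw [hPf R hR d, hPf R' hR' d]
    exact hK R R' hR hR' d hag
  -- ===== runs through nodes =====
  have hρex : ∀ t : List M, ∃ R, t ∈ G.tree → (R ∈ Runs G.tree ∧ runPrefix R t.length = t) := by
    intro t
    by_cases ht : t ∈ G.tree
    · obtain ⟨R, h1, h2⟩ := exists_run_through G.isGameTree ht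
      exact ⟨R, fun _ => ⟨h1, h2⟩⟩
    · exact ⟨Rstar, fun h => absurd h ht⟩
  choose ρ hρ using hρex
  -- ===== the factorization =====
  let f' : List M → List (MS (m₀ + K)) := fun t =>
    if ht : t ∈ G.tree then runPrefix (Pf (ρ t) (hρ t ht).1) t.length else []
  have hf'eq : ∀ t (ht : t ∈ G.tree), f' t = runPrefix (Pf (ρ t) (hρ t ht).1) t.length :=
    fun t ht => dif_pos ht
  refine ⟨m₀ + K, f', ⟨⟨?_, ?_, ?_⟩, ?_⟩, ?_⟩
  · intro t ht
    rw [hf'eq t ht]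
    exact (SS (m₀ + K)).payoff_subset (hPpay (ρ t) (hρ t ht).1) t.length
  · intro t ht
    rw [hf'eq t ht, runPrefix_length]
  · intro t ht k
    have htk : t.take k ∈ G.tree := G.isGameTree.1 t ht k
    rw [hf'eq _ htk, hf'eq t ht, runPrefix_take]
    have hlen : (t.take k).length = min k t.length := by simp
    have key : runPrefix (Pf (ρ (t.take k)) (hρ _ htk).1) (t.take k).length
        = runPrefix (Pf (ρ t) (hρ t ht).1) (t.take k).length := by
      apply hPcoh
      have h1 := (hρ _ htk).2
      rw [h1, hlen, ← runPrefix_take, (hρ t ht).2]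
    exact key.trans (congrArg (runPrefix (Pf (ρ t) (hρ t ht).1)) hlen)
  · intro R hR S hS
    have hRr : R ∈ Runs G.tree := G.payoff_subset hR
    have hSP : S = Pf R hRr := by
      apply runPrefix_inj; intro j
      have hmem : runPrefix R j ∈ G.tree := hRr j
      rw [hS j, hf'eq _ hmem]
      have hag : runPrefix (ρ (runPrefix R j)) (runPrefix R j).length
          = runPrefix R (runPrefix R j).length := by
        rw [(hρ _ hmem).2, runPrefix_length]
      have key := hPcoh (ρ (runPrefix R j)) R (hρ _ hmem).1 hRr ((runPrefix R j).length) hag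
      exact key.trans (congrArg (runPrefix (Pf R hRr)) (runPrefix_length R j))
    rw [hSP]
    exact hPpay R hRr
  · intro t ht
    rw [hf'eq t ht, ← hPbar (ρ t) (hρ t ht).1 t.length, hSLbar (ρ t) (hρ t ht).1 t.length,
      (hρ t ht).2]

end MPR
/-- a game is weakly finitely small in `Games_A` iff it is a finite game
that is trivial for Ali. -/
theorem weaklyFinSmall_gamesA_iff {M : Type u} (G : Game M) :
    WeaklyFinSmallGamesA G ↔ G.IsFin ∧ G.payoff = Runs G.tree := by
  constructor
  · exact fun h => fin_triv_of_small G h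
  · rintro ⟨hfin, htriv⟩
    exact small_of_fin_triv G hfin htriv

end FraisseGames
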